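/- Let p be a prime, b ≥ 0 and a < 0 be integers. Then for all natural numbers k with p-adic valuation sufficiently large, the binomial coefficient C(a+k, b) is congruent to (-1)^b · C(b-a-1, b) modulo p. -/

import Mathlib

open Finset Nat

private lemma asc_prod_aux (A : ℕ) : ∀ b : ℕ, A.ascFactorial b = ∏ i ∈ range b, (A + i)
  | 0 => rfl
  | b + 1 => by
      rw [Nat.ascFactorial_succ, prod_range_succ, asc_prod_aux A b, mul_comm]

/-- Binomial congruence: for a prime `p`, `b ≥ 0` and `a < 0`, for all `k : ℕ` with
`p`-adic valuation sufficiently large, `C(a+k, b) ≡ (-1)^b * C(b-a-1, b) (mod p)`. -/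
theorem stmt_0 (p : ℕ) (hp : p.Prime) (a : ℤ) (b : ℕ) (ha : a < 0) :
    ∃ N : ℕ, ∀ k : ℕ, N < padicValNat p k →
      (((a + (k : ℤ)).toNat.choose b : ZMod p)) =
        (-1) ^ b * ((((b : ℤ) - a - 1).toNat.choose b : ZMod p)) := by
  set A : ℕ := (-a).toNat with hAdef
  have haA : a = -(A : ℤ) := by simp [hAdef]; omega
  have hA1 : 1 ≤ A := by omega
  set ν : ℕ := (b !).factorization p with hνdef
  refine ⟨ν + A + b, ?_⟩
  intro k hk
  have hk0 : k ≠ 0 := by rintro rfl; simp [padicValNat.zero] at hk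
  have hdvd : p ^ (ν + A + b + 1) ∣ k :=
    dvd_trans (pow_dvd_pow p hk) (pow_padicValNat_dvd)
  have hklarge : A + b < k := by
    have h1 : p ^ (ν + A + b + 1) ≤ k := Nat.le_of_dvd (Nat.pos_of_ne_zero hk0) hdvd
    have h2 : 2 ^ (ν + A + b + 1) ≤ p ^ (ν + A + b + 1) :=
      Nat.pow_le_pow_left hp.two_le _
    have h3 : ν + A + b + 1 < 2 ^ (ν + A + b + 1) := Nat.lt_two_pow_self
    omega
  have hdvd' : p ^ (ν + 1) ∣ k :=
    dvd_trans (pow_dvd_pow p (by omega)) hdvd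
  set m : ℕ := (a + (k : ℤ)).toNat with hmdef
  have hm : (m : ℤ) = (k : ℤ) - A := by
    rw [hmdef, haA]; omega
  have hmk : m = k - A := by omega
  have hmb : b ≤ m := by omega
  -- step 1: descFactorial as product over ℤ
  have H1 : (m.descFactorial b : ℤ) = ∏ i ∈ range b, ((m : ℤ) - i) := by
    rw [Nat.descFactorial_eq_prod_range]
    push_cast
    refine prod_congr rfl fun i hi => ?_
    rw [Nat.cast_sub (by simp at hi; omega)]
  have H2 : (A.ascFactorial b : ℤ) = ∏ i ∈ range b, ((A : ℤ) + i) := by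
    rw [asc_prod_aux]; push_cast; rfl
  -- work in ZMod (p ^ (ν+1))
  have hkzero : ((k : ℤ) : ZMod (p ^ (ν + 1))) = 0 := by
    rw [Int.cast_natCast, ZMod.natCast_eq_zero_iff]
    exact hdvd'
  have hmcast : ((m : ℕ) : ZMod (p ^ (ν + 1))) = -((A : ℕ) : ZMod (p ^ (ν + 1))) := by
    have h := congrArg (fun z : ℤ => ((z : ℤ) : ZMod (p ^ (ν + 1)))) hm
    push_cast [hkzero] at h
    simpa using h
  have key : ((m.descFactorial b : ℤ) : ZMod (p ^ (ν + 1))) =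
      (((-1) ^ b * (A.ascFactorial b : ℤ) : ℤ) : ZMod (p ^ (ν + 1))) := by
    push_cast [H1, H2]
    calc ∏ x ∈ range b, (((m : ℕ) : ZMod (p ^ (ν + 1))) - x)
        = ∏ x ∈ range b, ((-1 : ZMod (p ^ (ν + 1))) * (((A : ℕ) : ZMod (p ^ (ν + 1))) + x)) :=
          prod_congr rfl fun i _ => by rw [hmcast]; ring
      _ = (-1) ^ b * ∏ x ∈ range b, (((A : ℕ) : ZMod (p ^ (ν + 1))) + x) := by
          rw [prod_mul_distrib, prod_const, card_range]
  -- convert to divisibility in ℤ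
  have hdvdZ : ((p : ℤ)) ^ (ν + 1) ∣
      ((m.descFactorial b : ℤ) - (-1) ^ b * (A.ascFactorial b : ℤ)) := by
    have := (ZMod.intCast_zmod_eq_zero_iff_dvd
      ((m.descFactorial b : ℤ) - (-1) ^ b * (A.ascFactorial b : ℤ)) (p ^ (ν + 1))).mp
      (by push_cast [sub_eq_zero]; push_cast at key; exact key)
    push_cast at this
    exact this
  rw [Nat.descFactorial_eq_factorial_mul_choose,
    Nat.ascFactorial_eq_factorial_mul_choose'] at hdvdZ
  -- factor out b! = p^ν * u
  set u : ℕ := b ! / p ^ ν with hudef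
  have hbfact : b ! = p ^ ν * u := (Nat.ordProj_mul_ordCompl_eq_self (b !) p).symm
  have hpu : ¬ (p : ℤ) ∣ (u : ℤ) := by
    rw [Int.natCast_dvd_natCast]
    exact Nat.not_dvd_ordCompl hp (Nat.factorial_ne_zero b)
  have hD : (p : ℤ) ∣ ((m.choose b : ℤ) - (-1) ^ b * ((A + b - 1).choose b : ℤ)) := by
    push_cast at hdvdZ
    have hfac : ((b ! : ℤ) * (m.choose b : ℤ) - (-1) ^ b * ((b ! : ℤ) * ((A + b - 1).choose b : ℤ)))
        = (p : ℤ) ^ ν * ((u : ℤ) * ((m.choose b : ℤ) - (-1) ^ b * ((A + b - 1).choose b : ℤ))) := by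
      rw [hbfact]; push_cast; ring
    rw [hfac, pow_succ] at hdvdZ
    have hpν : ((p : ℤ) ^ ν) ≠ 0 := pow_ne_zero _ (by exact_mod_cast hp.ne_zero)
    have h2 : (p : ℤ) ∣ (u : ℤ) * ((m.choose b : ℤ) - (-1) ^ b * ((A + b - 1).choose b : ℤ)) :=
      (mul_dvd_mul_iff_left hpν).mp hdvdZ
    rcases (Nat.prime_iff_prime_int.mp hp).dvd_mul.mp h2 with h | h
    · exact absurd h hpu
    · exact h
  -- conclude in ZMod p
  have htoNat : (((b : ℤ) - a - 1).toNat) = A + b - 1 := by omega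
  rw [htoNat]
  have := (ZMod.intCast_zmod_eq_zero_iff_dvd
    ((m.choose b : ℤ) - (-1) ^ b * ((A + b - 1).choose b : ℤ)) p).mpr hD
  push_cast [sub_eq_zero] at this
  exact_mod_cast this
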